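/- With predictive rates min{Q/S, 1} and min{q/s, 1} (taking rate 1 when the selection rate is 0), and budget constraint (1-β)S + βs = σ, predictive rate parity min{Q/S,1} = min{q/s,1} holds if and only if either (S = Qρ ≥ Q and s = qρ ≥ q) or (S ≤ Q and s ≤ q), where ρ = σ/((1-β)Q + βq). -/

import Mathlib

/-- Predictive rate parity min{Q/S,1} = min{q/s,1} (rate 1 when the
selection rate is 0) holds iff (S = Qρ ≥ Q and s = qρ ≥ q) or (S ≤ Q and s ≤ q),
where ρ = σ/((1-β)Q + βq). -/
theorem predictive_rate_parity_iff (β σ Q q S s ρ : ℝ)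
    (hβ : 0 < β) (hβ1 : β < 1) (hσ : 0 < σ) (hσ1 : σ < 1)
    (hQ : 0 < Q) (hQ1 : Q ≤ 1) (hq : 0 < q) (hq1 : q ≤ 1)
    (hS : 0 ≤ S) (hS1 : S ≤ 1) (hs : 0 ≤ s) (hs1 : s ≤ 1)
    (hbudget : (1 - β) * S + β * s = σ)
    (hρ : ρ = σ / ((1 - β) * Q + β * q)) :
    (if S = 0 then (1 : ℝ) else min (Q / S) 1) =
      (if s = 0 then (1 : ℝ) else min (q / s) 1) ↔
      ((S = Q * ρ ∧ Q ≤ S ∧ s = q * ρ ∧ q ≤ s) ∨ (S ≤ Q ∧ s ≤ q)) := by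
  have hD : 0 < (1 - β) * Q + β * q := by nlinarith
  constructor
  · intro h
    by_cases hS0 : S = 0
    · by_cases hs0 : s = 0
      · exact Or.inr ⟨by linarith, by linarith⟩
      · simp [hS0, hs0] at h
        have hspos : 0 < s := lt_of_le_of_ne hs (Ne.symm hs0)
        have := (one_le_div hspos).mp h
        exact Or.inr ⟨by linarith, this⟩
    · by_cases hs0 : s = 0
      · simp [hS0, hs0] at h
        have hSpos : 0 < S := lt_of_le_of_ne hS (Ne.symm hS0)
        have := (one_le_div hSpos).mp h
        exact Or.inr ⟨this, by linarith⟩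
      · simp [hS0, hs0] at h
        have hSpos : 0 < S := lt_of_le_of_ne hS (Ne.symm hS0)
        have hspos : 0 < s := lt_of_le_of_ne hs (Ne.symm hs0)
        by_cases hSQ : S ≤ Q
        · -- LHS min = 1
          have h1 : (1:ℝ) ≤ Q / S := (one_le_div hSpos).mpr hSQ
          rw [min_eq_right h1] at h
          have : 1 ≤ q / s := by
            rcases min_eq_iff.mp h.symm with h2 | h2
            · rw [h2.1]
            · exact h2.2
          exact Or.inr ⟨hSQ, (one_le_div hspos).mp this⟩
        · push_neg at hSQ
          have h1 : Q / S < 1 := (div_lt_one hSpos).mpr hSQ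
          rw [min_eq_left h1.le] at h
          have h2 : Q / S = q / s := by
            rcases min_eq_iff.mp h.symm with h2 | h2
            · exact h2.1.symm
            · linarith [h2.1 ▸ h1]
          have hqs : q * S = Q * s := by
            field_simp at h2
            linarith
          -- q < s from q/s = Q/S < 1
          have hqlt : q < s := by
            have : q / s < 1 := h2 ▸ h1
            exact (div_lt_one hspos).mp this
          left
          have hSD : S * ((1 - β) * Q + β * q) = Q * σ := by nlinarith
          have hsD : s * ((1 - β) * Q + β * q) = q * σ := by nlinarith
          refine ⟨?_, hSQ.le, ?_, hqlt.le⟩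
          · rw [hρ]; field_simp; rw [eq_div_iff (ne_of_gt (by nlinarith))]; linear_combination hSD
          · rw [hρ]; field_simp; rw [eq_div_iff (ne_of_gt (by nlinarith))]; linear_combination hsD
  · intro h
    rcases h with ⟨h1, h2, h3, h4⟩ | ⟨h1, h2⟩
    · have hSpos : 0 < S := lt_of_lt_of_le hQ h2
      have hspos : 0 < s := lt_of_lt_of_le hq h4
      have hρpos : 0 < ρ := by
        rw [hρ]; positivity
      have : Q / S = q / s := by
        rw [h1, h3]
        rw [div_eq_div_iff (by positivity) (by positivity)]
        ring
      simp only [ne_of_gt hSpos, ne_of_gt hspos, if_neg (ne_of_gt hSpos).symm,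
        if_neg (ne_of_gt hspos).symm]
      rw [this]
    · have hL : (if S = 0 then (1:ℝ) else min (Q / S) 1) = 1 := by
        split_ifs with h0
        · rfl
        · exact min_eq_right ((one_le_div (lt_of_le_of_ne hS (Ne.symm h0))).mpr h1)
      have hR : (if s = 0 then (1:ℝ) else min (q / s) 1) = 1 := by
        split_ifs with h0
        · rfl
        · exact min_eq_right ((one_le_div (lt_of_le_of_ne hs (Ne.symm h0))).mpr h2)
      rw [hL, hR]
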